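/- (Monotonicity of CR bias in the treatment allocation.) Let λ > 0 and 0 < φ < φ̃, with ψ = φ·F(φ) and ψ̃ = φ̃·F(φ̃). Define B_CR(a) = λ·(ψ̃ − ψ)·F(λ·(a·ψ̃ + (1−a)·ψ)) − GTE where GTE = λ·(ψ̃·F(λψ̃) − ψ·F(λψ)) is constant in a. Then B_CR is positive and strictly decreasing on (0,1). -/

import Mathlib

noncomputable def F : ℝ → ℝ := fun x => if x = 0 then 1 else (1 - Real.exp (-x)) / x

lemma F_of_pos {x : ℝ} (hx : 0 < x) : F x = (1 - Real.exp (-x)) / x := by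
  simp [F, hx.ne']

lemma mul_F_of_pos {x : ℝ} (hx : 0 < x) : x * F x = 1 - Real.exp (-x) := by
  rw [F_of_pos hx]; field_simp

lemma strictConvexOn_exp_neg_mul {lam : ℝ} (hlam : lam ≠ 0) :
    StrictConvexOn ℝ Set.univ (fun t : ℝ => Real.exp (-(lam * t))) := by
  refine ⟨convex_univ, ?_⟩
  intro x _ y _ hxy a b ha hb hab
  have hne : -(lam * x) ≠ -(lam * y) := by
    simp only [ne_eq, neg_inj]
    exact fun h => hxy (mul_left_cancel₀ hlam h)
  have := strictConvexOn_exp.2 (Set.mem_univ (-(lam * x))) (Set.mem_univ (-(lam * y)))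
    hne ha hb hab
  have harg : a • (-(lam * x)) + b • (-(lam * y)) = -(lam * (a • x + b • y)) := by
    simp only [smul_eq_mul]; ring
  rw [harg] at this
  simpa using this

/-- slope of t ↦ exp(-lam t) through a fixed point is strictly monotone. -/
lemma slope_lt {lam a x y : ℝ} (hlam : lam ≠ 0) (hxa : x ≠ a) (hya : y ≠ a) (hxy : x < y) :
    (Real.exp (-(lam * x)) - Real.exp (-(lam * a))) / (x - a)
      < (Real.exp (-(lam * y)) - Real.exp (-(lam * a))) / (y - a) :=
  (strictConvexOn_exp_neg_mul hlam).secant_strict_mono (Set.mem_univ a)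
    (Set.mem_univ x) (Set.mem_univ y) hxa hya hxy

/-- F is strictly decreasing on positive reals. -/
lemma F_strict_anti {x y : ℝ} (hx : 0 < x) (hxy : x < y) : F y < F x := by
  have h := slope_lt (lam := 1) (a := 0) one_ne_zero hx.ne' (hx.trans hxy).ne' hxy
  simp only [mul_zero, neg_zero, Real.exp_zero, sub_zero, one_mul] at h
  rw [F_of_pos hx, F_of_pos (hx.trans hxy)]
  have hx' : (Real.exp (-x) - 1) / x = -((1 - Real.exp (-x)) / x) := by ring
  have hy' : (Real.exp (-y) - 1) / y = -((1 - Real.exp (-y)) / y) := by ring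
  rw [hx', hy'] at h
  linarith

theorem stmt_7 (lam φ φt : ℝ) (hlam : 0 < lam) (hφ : 0 < φ) (hlt : φ < φt) :
    (∀ a ∈ Set.Ioo (0:ℝ) 1,
      0 < lam * (φt * F φt - φ * F φ)
            * F (lam * (a * (φt * F φt) + (1 - a) * (φ * F φ)))
          - lam * (φt * F φt * F (lam * (φt * F φt)) - φ * F φ * F (lam * (φ * F φ)))) ∧
    StrictAntiOn (fun a : ℝ =>
      lam * (φt * F φt - φ * F φ)
          * F (lam * (a * (φt * F φt) + (1 - a) * (φ * F φ)))
        - lam * (φt * F φt * F (lam * (φt * F φt)) - φ * F φ * F (lam * (φ * F φ))))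
      (Set.Ioo (0:ℝ) 1) := by
  have hφt : 0 < φt := hφ.trans hlt
  set ψ := φ * F φ with hψdef
  set ψt := φt * F φt with hψtdef
  have hψ : ψ = 1 - Real.exp (-φ) := mul_F_of_pos hφ
  have hψt : ψt = 1 - Real.exp (-φt) := mul_F_of_pos hφt
  have hψpos : 0 < ψ := by
    rw [hψ]; have := Real.exp_lt_one_iff.mpr (neg_lt_zero.mpr hφ); linarith
  have hψlt : ψ < ψt := by
    rw [hψ, hψt]
    have := Real.exp_lt_exp.mpr (neg_lt_neg hlt)
    linarith
  have hψtpos : 0 < ψt := hψpos.trans hψlt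
  -- value of λ s F(λ s) for s > 0
  have key : ∀ s : ℝ, 0 < s → lam * F (lam * s) = (1 - Real.exp (-(lam * s))) / s := by
    intro s hs
    have hls : 0 < lam * s := mul_pos hlam hs
    rw [F_of_pos hls]
    field_simp
  -- the s(a) map
  have hsa : ∀ a ∈ Set.Ioo (0:ℝ) 1, ψ < a * ψt + (1 - a) * ψ ∧ a * ψt + (1 - a) * ψ < ψt := by
    rintro a ⟨ha0, ha1⟩
    constructor <;> nlinarith
  -- positivity
  have hpos : ∀ a ∈ Set.Ioo (0:ℝ) 1,
      0 < lam * (ψt - ψ) * F (lam * (a * ψt + (1 - a) * ψ))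
          - lam * (ψt * F (lam * ψt) - ψ * F (lam * ψ)) := by
    intro a ha
    obtain ⟨h1, h2⟩ := hsa a ha
    set s := a * ψt + (1 - a) * ψ with hsdef
    have hspos : 0 < s := hψpos.trans h1
    -- rewrite the pieces
    have e1 : lam * (ψt - ψ) * F (lam * s)
        = (ψt - ψ) * ((1 - Real.exp (-(lam * s))) / s) := by
      rw [show lam * (ψt - ψ) * F (lam * s) = (ψt - ψ) * (lam * F (lam * s)) by ring,
        key s hspos]
    have e2 : ψt * F (lam * ψt) = (1 - Real.exp (-(lam * ψt))) / lam := by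
      have := key ψt hψtpos
      have h := mul_F_of_pos (mul_pos hlam hψtpos)
      field_simp at h ⊢
      linarith [h]
    have e3 : ψ * F (lam * ψ) = (1 - Real.exp (-(lam * ψ))) / lam := by
      have h := mul_F_of_pos (mul_pos hlam hψpos)
      field_simp at h ⊢
      linarith [h]
    rw [e1, e2, e3]
    -- reduce to slope inequality: slope(0,s) < slope(ψ,ψt) for exp(-λt)
    have hs1 : (Real.exp (-(lam * s)) - Real.exp (-(lam * 0))) / (s - 0)
        < (Real.exp (-(lam * ψt)) - Real.exp (-(lam * 0))) / (ψt - 0) :=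
      slope_lt hlam.ne' hspos.ne' hψtpos.ne' h2
    have hs2 : (Real.exp (-(lam * 0)) - Real.exp (-(lam * ψt))) / (0 - ψt)
        < (Real.exp (-(lam * ψ)) - Real.exp (-(lam * ψt))) / (ψ - ψt) :=
      slope_lt hlam.ne' hψtpos.ne hψlt.ne hψpos
    simp only [mul_zero, neg_zero, Real.exp_zero, sub_zero] at hs1 hs2
    -- convert hs2 : slope(ψt,0) < slope(ψt,ψ), note denominators negative
    have hψtψ : ψ - ψt < 0 := by linarith
    -- goal: 0 < (ψt-ψ)*((1-e^{-λs})/s) - ((1-e^{-λψt})/λ - (1-e^{-λψ})/λ)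
    -- i.e. (1-e^{-λs})/s > (e^{-λψ} - e^{-λψt})/(ψt-ψ)  ... but careful about λ
    rw [show lam * ((1 - Real.exp (-(lam * ψt))) / lam - (1 - Real.exp (-(lam * ψ))) / lam)
        = Real.exp (-(lam * ψ)) - Real.exp (-(lam * ψt)) by field_simp; ring]
    have A : (Real.exp (-(lam * s)) - 1) / s < (Real.exp (-(lam * ψt)) - 1) / ψt := hs1
    have B : (1 - Real.exp (-(lam * ψt))) / (0 - ψt)
        < (Real.exp (-(lam * ψ)) - Real.exp (-(lam * ψt))) / (ψ - ψt) := hs2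
    have A' : (Real.exp (-(lam * ψt)) - 1) / ψt
        = (1 - Real.exp (-(lam * ψt))) / (0 - ψt) := by
      rw [div_eq_div_iff hψtpos.ne' (by linarith : (0:ℝ) - ψt ≠ 0)]
      ring
    have C : (Real.exp (-(lam * s)) - 1) / s
        < (Real.exp (-(lam * ψ)) - Real.exp (-(lam * ψt))) / (ψ - ψt) := by
      rw [A'] at A; exact A.trans B
    -- multiply out
    have hD : (Real.exp (-(lam * ψ)) - Real.exp (-(lam * ψt))) / (ψ - ψt)
        = -((Real.exp (-(lam * ψ)) - Real.exp (-(lam * ψt))) / (ψt - ψ)) := by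
      rw [show ψ - ψt = -(ψt - ψ) by ring, div_neg]
    rw [hD] at C
    have C2 : (Real.exp (-(lam * ψ)) - Real.exp (-(lam * ψt))) / (ψt - ψ)
        < (1 - Real.exp (-(lam * s))) / s := by
      have : (Real.exp (-(lam * s)) - 1) / s = -((1 - Real.exp (-(lam * s))) / s) := by ring
      rw [this] at C
      linarith
    have hdenom : 0 < ψt - ψ := by linarith
    have hfin := (div_lt_iff₀ hdenom).mp C2
    nlinarith [hfin]
  -- strict antitonicity
  have hanti : StrictAntiOn (fun a : ℝ =>
      lam * (ψt - ψ) * F (lam * (a * ψt + (1 - a) * ψ))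
        - lam * (ψt * F (lam * ψt) - ψ * F (lam * ψ))) (Set.Ioo (0:ℝ) 1) := by
    intro a ha b hb hab
    simp only
    have hsa' := (hsa a ha).1
    have hsb' := (hsa b hb).1
    have hslt : a * ψt + (1 - a) * ψ < b * ψt + (1 - b) * ψ := by nlinarith
    have h1 : 0 < lam * (a * ψt + (1 - a) * ψ) := mul_pos hlam (hψpos.trans hsa')
    have h2 : lam * (a * ψt + (1 - a) * ψ) < lam * (b * ψt + (1 - b) * ψ) :=
      (mul_lt_mul_iff_right₀ hlam).mpr hslt
    have hF := F_strict_anti h1 h2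
    have hc : 0 < lam * (ψt - ψ) := mul_pos hlam (by linarith)
    nlinarith [hF, hc]
  exact ⟨hpos, hanti⟩
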